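/- Under the stated hypotheses, the map t ↦ h*(t,·) is continuous from [0,∞) into C_b(ℝ), the space of bounded continuous functions on ℝ endowed with the supremum norm. -/

import Mathlib

open MeasureTheory Set Filter Topology

/-- Key lemma: for an `L`-Lipschitz function with integrable square,
`|g x0|^3 / (4L) ≤ ∫ g²`. -/
lemma key_lip_l2 (L : ℝ) (hL : 0 < L) (g : ℝ → ℝ)
    (hg : ∀ x1 x2 : ℝ, |g x1 - g x2| ≤ L * |x1 - x2|)
    (hint : Integrable (fun x => g x ^ 2)) (x0 : ℝ) :
    |g x0| ^ 3 / (4 * L) ≤ ∫ x : ℝ, g x ^ 2 := by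
  set M := |g x0| with hM
  have hM0 : 0 ≤ M := abs_nonneg _
  set r := M / (2 * L) with hr
  have hr0 : 0 ≤ r := by positivity
  set I : Set ℝ := Set.Icc (x0 - r) (x0 + r) with hI
  have hlow : ∀ x ∈ I, (M / 2) ^ 2 ≤ g x ^ 2 := by
    intro x hx
    obtain ⟨hxa, hxb⟩ := hx
    have hxd : |x0 - x| ≤ r := by
      rw [abs_sub_le_iff]
      constructor <;> linarith
    have h1 : M - |g x| ≤ |g x0 - g x| := by
      have := abs_sub_abs_le_abs_sub (g x0) (g x)
      linarith
    have h2 : |g x0 - g x| ≤ L * r := by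
      calc |g x0 - g x| ≤ L * |x0 - x| := hg x0 x
        _ ≤ L * r := by nlinarith
    have hLr : L * r = M / 2 := by
      rw [hr]; field_simp
    have h3 : M / 2 ≤ |g x| := by linarith
    calc (M / 2) ^ 2 ≤ |g x| ^ 2 := by nlinarith
      _ = g x ^ 2 := sq_abs _
  have hmeas : MeasurableSet I := measurableSet_Icc
  have hconst : ∫ x in I, (M / 2) ^ 2 = (2 * r) * (M / 2) ^ 2 := by
    have hv : (volume I).toReal = 2 * r := by
      rw [hI, Real.volume_Icc]
      rw [ENNReal.toReal_ofReal (by linarith)]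
      ring
    rw [setIntegral_const, measureReal_def, hv, smul_eq_mul]
  have step1 : (2 * r) * (M / 2) ^ 2 ≤ ∫ x in I, g x ^ 2 := by
    rw [← hconst]
    apply setIntegral_mono_on (integrableOn_const ?_) hint.integrableOn hmeas hlow
    rw [hI, Real.volume_Icc]
    exact ENNReal.ofReal_ne_top
  have step2 : ∫ x in I, g x ^ 2 ≤ ∫ x : ℝ, g x ^ 2 := by
    apply setIntegral_le_integral hint
    filter_upwards with x using sq_nonneg _
  have heq : M ^ 3 / (4 * L) = (2 * r) * (M / 2) ^ 2 := by
    rw [hr]; field_simp; ring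
  linarith [heq ▸ step1]

theorem stmt_16 (L0 : ℝ) (hL0 : 1 ≤ L0)
    (α β : ℝ → ℝ)
    (hα : ContinuousOn α (Set.Ici 0)) (hβ : ContinuousOn β (Set.Ici 0))
    (hstar : ℝ → ℝ → ℝ)
    (hLip : ∀ t ∈ Set.Ici (0:ℝ), ∀ x1 x2 : ℝ,
      |hstar t x1 - hstar t x2| ≤ L0 * |x1 - x2|)
    (hsupp : ∀ t ∈ Set.Ici (0:ℝ), ∀ x : ℝ, x ∉ Set.Ioo (α t) (β t) → hstar t x = 0)
    (hL2cont : ∀ t0 ∈ Set.Ici (0:ℝ), ∀ ε : ℝ, 0 < ε → ∃ δ : ℝ, 0 < δ ∧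
      ∀ t ∈ Set.Ici (0:ℝ), |t - t0| < δ →
        (∫ x : ℝ, (hstar t x - hstar t0 x) ^ 2) < ε) :
    ∀ t0 ∈ Set.Ici (0:ℝ), ∀ ε : ℝ, 0 < ε → ∃ δ : ℝ, 0 < δ ∧
      ∀ t ∈ Set.Ici (0:ℝ), |t - t0| < δ →
        ∀ x : ℝ, |hstar t x - hstar t0 x| < ε := by
  intro t0 ht0 ε hε
  have hL0' : (0:ℝ) < L0 := lt_of_lt_of_le one_pos hL0
  set ε' := (ε / 2) ^ 3 / (8 * L0) with hε'
  have hε'0 : 0 < ε' := by positivity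
  obtain ⟨δ, hδ0, hδ⟩ := hL2cont t0 ht0 ε' hε'0
  refine ⟨δ, hδ0, fun t ht htd x => ?_⟩
  set g : ℝ → ℝ := fun x => hstar t x - hstar t0 x with hg
  -- g is (2*L0)-Lipschitz
  have hgLip : ∀ x1 x2 : ℝ, |g x1 - g x2| ≤ (2 * L0) * |x1 - x2| := by
    intro x1 x2
    have h1 := hLip t ht x1 x2
    have h2 := hLip t0 ht0 x1 x2
    calc |g x1 - g x2|
        = |(hstar t x1 - hstar t x2) + -(hstar t0 x1 - hstar t0 x2)| := by
          simp only [hg]; ring_nf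
      _ ≤ |hstar t x1 - hstar t x2| + |-(hstar t0 x1 - hstar t0 x2)| := abs_add_le _ _
      _ = |hstar t x1 - hstar t x2| + |hstar t0 x1 - hstar t0 x2| := by rw [abs_neg]
      _ ≤ (2 * L0) * |x1 - x2| := by linarith
  -- g is continuous
  have hgc : Continuous g := by
    apply LipschitzWith.continuous (K := ⟨2 * L0, by positivity⟩)
    apply LipschitzWith.of_dist_le_mul
    intro x y
    simp only [Real.dist_eq]; exact hgLip x y
  -- g has compact support
  have hgs : HasCompactSupport g := by
    apply HasCompactSupport.intro (isCompact_Icc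
      (a := min (α t) (α t0)) (b := max (β t) (β t0)))
    intro x hx
    rw [Set.mem_Icc, not_and_or, not_le, not_le] at hx
    have h1 : hstar t x = 0 := by
      apply hsupp t ht
      rw [Set.mem_Ioo, not_and_or, not_lt, not_lt]
      rcases hx with h | h
      · exact Or.inl (le_of_lt (lt_of_lt_of_le h (min_le_left _ _)))
      · exact Or.inr (le_of_lt (lt_of_le_of_lt (le_max_left _ _) h))
    have h2 : hstar t0 x = 0 := by
      apply hsupp t0 ht0
      rw [Set.mem_Ioo, not_and_or, not_lt, not_lt]
      rcases hx with h | h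
      · exact Or.inl (le_of_lt (lt_of_lt_of_le h (min_le_right _ _)))
      · exact Or.inr (le_of_lt (lt_of_le_of_lt (le_max_right _ _) h))
    simp [hg, h1, h2]
  -- g² is integrable
  have hint : Integrable (fun x => g x ^ 2) := by
    apply Continuous.integrable_of_hasCompactSupport (by continuity)
    have : (fun x => g x ^ 2) = (fun y : ℝ => y ^ 2) ∘ g := rfl
    rw [this]
    exact hgs.comp_left (by norm_num)
  have hkey := key_lip_l2 (2 * L0) (by positivity) g hgLip hint x
  have hL2 := hδ t ht htd
  have hint' : (∫ x : ℝ, g x ^ 2) < ε' := hL2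
  have hcube : |g x| ^ 3 < (ε / 2) ^ 3 := by
    have h8 : (4 : ℝ) * (2 * L0) = 8 * L0 := by ring
    have := hkey.trans_lt hint'
    rw [hε', h8] at this
    calc |g x| ^ 3 = |g x| ^ 3 / (8 * L0) * (8 * L0) := by field_simp
      _ < (ε / 2) ^ 3 / (8 * L0) * (8 * L0) := by
          apply mul_lt_mul_of_pos_right this (by positivity)
      _ = (ε / 2) ^ 3 := by field_simp
  have : |g x| < ε / 2 :=
    lt_of_pow_lt_pow_left₀ 3 (by positivity) hcube
  have : |g x| < ε := by linarith
  exact this
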